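/- Exactness identity for the FPF update (algebraic core of Theorem 2): Let π be a probability measure, h, f square-integrable functions, and suppose K·f satisfies π(K·f) = π((h − π(h)) f) for every f (Poisson-equation property), and u·f = −(1/2)(h − π(h))(K·f) − π(h)(K·f). Then π(u·f) + (1/2) π(K·(K·f)) + π(K·f) ż = (π(fh) − π(h)π(f))(ż − π(h)) for any scalar ż, provided additionally π(K·(K·f)) = π((h − π(h)) K·f). -/
import Mathlib


open MeasureTheory

theorem fpf_exactness_core {Ω : Type*} [MeasurableSpace Ω] (π : Measure Ω)
    [IsProbabilityMeasure π]
    (h f Kf KKf uf : Ω → ℝ)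
    (hh : Integrable h π) (hf : Integrable f π)
    (hfh : Integrable (fun x => f x * h x) π)
    (hKf : Integrable Kf π) (hKKf : Integrable KKf π)
    (huf : Integrable uf π)
    (hPE : ∫ x, Kf x ∂π = ∫ x, (h x - ∫ y, h y ∂π) * f x ∂π)
    (hPE2 : ∫ x, KKf x ∂π = ∫ x, (h x - ∫ y, h y ∂π) * Kf x ∂π)
    (hu : ∀ x, uf x = -(1/2) * (h x - ∫ y, h y ∂π) * Kf x - (∫ y, h y ∂π) * Kf x)
    (zdot : ℝ) :
    (∫ x, uf x ∂π) + (1/2) * (∫ x, KKf x ∂π) + (∫ x, Kf x ∂π) * zdot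
      = ((∫ x, f x * h x ∂π) - (∫ x, h x ∂π) * (∫ x, f x ∂π)) * (zdot - ∫ x, h x ∂π) := by
  set m : ℝ := ∫ y, h y ∂π with hm
  -- (h - m) * Kf = -2 * (uf + m * Kf)
  have hkey : ∀ x, (h x - m) * Kf x = -2 * (uf x + m * Kf x) := by
    intro x; have := hu x; nlinarith [hu x]
  have h1 : ∫ x, (h x - m) * Kf x ∂π = -2 * ((∫ x, uf x ∂π) + m * ∫ x, Kf x ∂π) := by
    rw [show (fun x => (h x - m) * Kf x) = fun x => -2 * (uf x + m * Kf x) from funext hkey]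
    rw [integral_const_mul, integral_add huf (hKf.const_mul m), integral_const_mul]
  have h2 : ∫ x, (h x - m) * f x ∂π = (∫ x, f x * h x ∂π) - m * ∫ x, f x ∂π := by
    have : (fun x => (h x - m) * f x) = fun x => f x * h x - m * f x := by
      funext x; ring
    rw [this, integral_sub hfh (hf.const_mul m), integral_const_mul]
  have h3 : ∫ x, Kf x ∂π = (∫ x, f x * h x ∂π) - m * ∫ x, f x ∂π := by
    rw [hPE, h2]
  rw [hPE2, h1, h3]
  ring
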